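/- Let E ⊆ U be the linear span of 6 vectors of B that form an induced subgraph isomorphic to the Dynkin graph E₆. Then every 5-dimensional vector subspace of E contains at least two vectors w with Q(w) = 1. (Indeed, E consists of 28 vectors with Q = 0 and 36 vectors with Q = 1.) -/

import Mathlib

namespace TF2

variable {V : Type*} [AddCommGroup V] [Module (ZMod 2) V]

/-- The symplectic transvection `τ_b(x) = x - Ω(x, b) b`. -/
def transv (Om : V →ₗ[ZMod 2] V →ₗ[ZMod 2] ZMod 2) (b : V) (x : V) : V :=
  x - Om x b • b

/-- The group `Γ` of transformations of `V` generated by the transvections `τ_b`, `b ∈ B`. -/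
def Gamma (Om : V →ₗ[ZMod 2] V →ₗ[ZMod 2] ZMod 2) (B : Set V) : Subgroup (Equiv.Perm V) :=
  Subgroup.closure {g | ∃ b ∈ B, ⇑g = transv Om b}

/-- The set `V^Γ` of `Γ`-invariant vectors. -/
def fixedSet (Om : V →ₗ[ZMod 2] V →ₗ[ZMod 2] ZMod 2) (B : Set V) : Set V :=
  {x | ∀ g ∈ Gamma Om B, g x = x}

/-- The parallel translate `v + U` of the span `U` of `B`. -/
def slice (B : Set V) (v : V) : Set V :=
  {x | ∃ u ∈ Submodule.span (ZMod 2) B, x = v + u}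

/-- The kernel `K` of the restriction of `Ω` to the span `U` of `B`, as a set. -/
def kerRestrict (Om : V →ₗ[ZMod 2] V →ₗ[ZMod 2] ZMod 2) (B : Set V) : Set V :=
  {k | k ∈ Submodule.span (ZMod 2) B ∧ ∀ u ∈ Submodule.span (ZMod 2) B, Om k u = 0}

/-- The graph on `B` with `b`, `b'` adjacent iff `Ω(b, b') = 1`. -/
def bGraph (Om : V →ₗ[ZMod 2] V →ₗ[ZMod 2] ZMod 2) (B : Set V) : SimpleGraph B where
  Adj b b' := b ≠ b' ∧ Om b b' = 1 ∧ Om b' b = 1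
  symm := by
    constructor
    rintro x y ⟨h1, h2, h3⟩
    exact ⟨h1.symm, h3, h2⟩
  loopless := by
    constructor
    rintro x ⟨h1, -⟩
    exact h1 rfl

/-- The Dynkin graph `E₆`: a path `0 - 1 - 2 - 3 - 4` with an extra vertex `5` attached to
the middle vertex `2`. -/
def dynkinE6 : SimpleGraph (Fin 6) :=
  SimpleGraph.fromRel fun x y =>
    (x = 0 ∧ y = 1) ∨ (x = 1 ∧ y = 2) ∨ (x = 2 ∧ y = 3) ∨ (x = 3 ∧ y = 4) ∨ (x = 2 ∧ y = 5)

/-- A graph is `E₆`-compatible if it is connected and contains an induced subgraph on six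
vertices isomorphic to the Dynkin graph `E₆`. -/
def E6Compatible {α : Type*} (G : SimpleGraph α) : Prop :=
  G.Connected ∧ ∃ f : Fin 6 → α, Function.Injective f ∧
    ∀ x y, G.Adj (f x) (f y) ↔ dynkinE6.Adj x y


instance : DecidableRel dynkinE6.Adj := fun x y =>
  decidable_of_iff _ (SimpleGraph.fromRel_adj _ x y).symm

/-- The explicit quadratic form attached to the `E₆` configuration. -/
def qE6 (e : Fin 6 → ZMod 2) : ZMod 2 :=
  e 0 + e 1 + e 2 + e 3 + e 4 + e 5 +
    e 0 * e 1 + e 1 * e 2 + e 2 * e 3 + e 3 * e 4 + e 2 * e 5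


variable {V : Type*} [AddCommGroup V] [Module (ZMod 2) V] [FiniteDimensional (ZMod 2) V]

/-- Lemma 6.4 (b): every 5-dimensional subspace of `E` contains at least two vectors with
`Q = 1`; indeed `E` consists of 28 vectors with `Q = 0` and 36 vectors with `Q = 1`. -/
theorem five_dim_subspace (Om : V →ₗ[ZMod 2] V →ₗ[ZMod 2] ZMod 2)
    (hAlt : ∀ x, Om x x = 0) (B : Set V)
    (hB : LinearIndependent (ZMod 2) ((↑) : B → V))
    (Q : V → ZMod 2) (hQ : ∀ x y, Q (x + y) = Q x + Q y + Om x y)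
    (hQB : ∀ b ∈ B, Q b = 1)
    (b : Fin 6 → V) (hbB : ∀ x, b x ∈ B) (hbinj : Function.Injective b)
    (hiso : ∀ x y, Om (b x) (b y) = 1 ↔ dynkinE6.Adj x y) :
    (∀ Wsub : Submodule (ZMod 2) V, Wsub ≤ Submodule.span (ZMod 2) (Set.range b) →
      Module.finrank (ZMod 2) ↥Wsub = 5 →
      ∃ w₁ ∈ Wsub, ∃ w₂ ∈ Wsub, w₁ ≠ w₂ ∧ Q w₁ = 1 ∧ Q w₂ = 1) ∧
    Nat.card {x : V | x ∈ Submodule.span (ZMod 2) (Set.range b) ∧ Q x = 0} = 28 ∧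
    Nat.card {x : V | x ∈ Submodule.span (ZMod 2) (Set.range b) ∧ Q x = 1} = 36 := by
  classical
  -- the parametrizing linear map
  set f : (Fin 6 → ZMod 2) →ₗ[ZMod 2] V := Fintype.linearCombination (ZMod 2) b with hf
  have hfapp : ∀ ε : Fin 6 → ZMod 2, f ε = ∑ i, ε i • b i := fun ε => rfl
  -- linear independence of b
  have li : LinearIndependent (ZMod 2) b := by
    have hb' : Function.Injective (fun i : Fin 6 => (⟨b i, hbB i⟩ : B)) := by
      intro i j h
      exact hbinj (congrArg Subtype.val h)
    have := hB.comp (fun i : Fin 6 => (⟨b i, hbB i⟩ : B)) hb'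
    exact this
  have hinj : Function.Injective f := by
    rw [← LinearMap.ker_eq_bot]
    refine (Submodule.eq_bot_iff _).2 fun ε hε => ?_
    have h0 : ∑ i, ε i • b i = 0 := by rw [← hfapp]; exact hε
    funext i
    exact Fintype.linearIndependent_iff.mp li ε h0 i
  have hrange : LinearMap.range f = Submodule.span (ZMod 2) (Set.range b) := by
    rw [hf]; exact Fintype.range_linearCombination _ _
  -- basic facts about Q
  have hQ0 : Q 0 = 0 := by
    have h := hQ 0 0
    rw [add_zero] at h
    have hz : (Om 0) 0 = 0 := by simp
    have hgen : ∀ a o : ZMod 2, a = a + a + o → o = 0 → a = 0 := by decide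
    exact hgen _ _ h hz
  have hQs : ∀ (a : ZMod 2) (v : V), Q (a • v) = a * Q v := by
    intro a v
    have ha : a = 0 ∨ a = 1 := by revert a; decide
    rcases ha with rfl | rfl
    · simp [hQ0]
    · simp
  have hQb : ∀ i : Fin 6, Q (b i) = 1 := fun i => hQB _ (hbB i)
  -- the values of Om on the b i
  have hz2 : ∀ a : ZMod 2, a ≠ 1 → a = 0 := by decide
  have hOmN : ∀ i j : Fin 6, ¬ dynkinE6.Adj i j → Om (b i) (b j) = 0 :=
    fun i j h => hz2 _ (fun he => h ((hiso i j).mp he))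
  have h01 : Om (b 0) (b 1) = 1 := (hiso 0 1).mpr (by decide)
  have h12 : Om (b 1) (b 2) = 1 := (hiso 1 2).mpr (by decide)
  have h23 : Om (b 2) (b 3) = 1 := (hiso 2 3).mpr (by decide)
  have h34 : Om (b 3) (b 4) = 1 := (hiso 3 4).mpr (by decide)
  have h25 : Om (b 2) (b 5) = 1 := (hiso 2 5).mpr (by decide)
  have h02 : Om (b 0) (b 2) = 0 := hOmN 0 2 (by decide)
  have h03 : Om (b 0) (b 3) = 0 := hOmN 0 3 (by decide)
  have h04 : Om (b 0) (b 4) = 0 := hOmN 0 4 (by decide)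
  have h05 : Om (b 0) (b 5) = 0 := hOmN 0 5 (by decide)
  have h13 : Om (b 1) (b 3) = 0 := hOmN 1 3 (by decide)
  have h14 : Om (b 1) (b 4) = 0 := hOmN 1 4 (by decide)
  have h15 : Om (b 1) (b 5) = 0 := hOmN 1 5 (by decide)
  have h24 : Om (b 2) (b 4) = 0 := hOmN 2 4 (by decide)
  have h35 : Om (b 3) (b 5) = 0 := hOmN 3 5 (by decide)
  have h45 : Om (b 4) (b 5) = 0 := hOmN 4 5 (by decide)
  -- the key computation
  have key : ∀ ε : Fin 6 → ZMod 2, Q (f ε) = qE6 ε := by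
    intro ε
    rw [hfapp, Fin.sum_univ_six]
    simp only [hQ, hQs, hQb, map_add, map_smul, LinearMap.add_apply, LinearMap.smul_apply,
      smul_eq_mul, h01, h12, h23, h34, h25, h02, h03, h04, h05, h13, h14, h15, h24, h35, h45,
      qE6]
    ring
  -- membership characterization
  have hmem : ∀ x : V, x ∈ Submodule.span (ZMod 2) (Set.range b) ↔ ∃ ε, f ε = x := by
    intro x
    rw [← hrange]
    exact ⟨fun h => h, fun h => h⟩
  -- image descriptions
  have himg : ∀ c : ZMod 2,
      {x : V | x ∈ Submodule.span (ZMod 2) (Set.range b) ∧ Q x = c} =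
        f '' {ε | qE6 ε = c} := by
    intro c
    ext x
    constructor
    · rintro ⟨hx, hQx⟩
      obtain ⟨ε, rfl⟩ := (hmem x).mp hx
      exact ⟨ε, show qE6 ε = c by rw [← key ε]; exact hQx, rfl⟩
    · rintro ⟨ε, hε, rfl⟩
      exact ⟨(hmem _).mpr ⟨ε, rfl⟩, by rw [key ε]; exact hε⟩
  have hcard : ∀ c : ZMod 2,
      Nat.card {x : V | x ∈ Submodule.span (ZMod 2) (Set.range b) ∧ Q x = c} =
        Nat.card {ε : Fin 6 → ZMod 2 | qE6 ε = c} := by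
    intro c
    rw [himg c]
    exact Nat.card_image_of_injective hinj _
  have hc0 : Nat.card {ε : Fin 6 → ZMod 2 | qE6 ε = 0} = 28 := by
    rw [Nat.card_eq_fintype_card]
    decide
  have hc1 : Nat.card {ε : Fin 6 → ZMod 2 | qE6 ε = 1} = 36 := by
    rw [Nat.card_eq_fintype_card]
    decide
  refine ⟨?_, by rw [hcard 0]; exact hc0, by rw [hcard 1]; exact hc1⟩
  intro Wsub hle hrank
  -- pull back the subspace
  set W' : Submodule (ZMod 2) (Fin 6 → ZMod 2) := Wsub.comap f with hW'
  have hmap : Submodule.map f W' = Wsub := by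
    rw [hW', Submodule.map_comap_eq, hrange]
    exact inf_eq_right.mpr hle
  have hrank' : Module.finrank (ZMod 2) W' = 5 := by
    have e := Submodule.equivMapOfInjective f hinj W'
    rw [e.finrank_eq, hmap, hrank]
  have hcardW : Nat.card W' = 32 := by
    have bW := Module.finBasisOfFinrankEq (ZMod 2) W' hrank'
    have e : W' ≃ₗ[ZMod 2] (Fin 5 → ZMod 2) := bW.equivFun
    rw [Nat.card_congr e.toEquiv, Nat.card_eq_fintype_card]
    decide
  -- counting intersection
  set A : Set (Fin 6 → ZMod 2) := (W' : Set (Fin 6 → ZMod 2)) with hA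
  set S : Set (Fin 6 → ZMod 2) := {ε | qE6 ε = 1} with hS
  have hAcard : A.ncard = 32 := by rw [← Nat.card_coe_set_eq]; exact hcardW
  have hScard : S.ncard = 36 := by rw [← Nat.card_coe_set_eq]; exact hc1
  have hunion : (A ∪ S).ncard ≤ 64 := by
    have h1 : (A ∪ S).ncard ≤ (Set.univ : Set (Fin 6 → ZMod 2)).ncard :=
      Set.ncard_le_ncard (Set.subset_univ _) (Set.finite_univ)
    have h2 : (Set.univ : Set (Fin 6 → ZMod 2)).ncard = 64 := by
      rw [Set.ncard_univ, Nat.card_eq_fintype_card]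
      decide
    omega
  have hsum : (A ∪ S).ncard + (A ∩ S).ncard = A.ncard + S.ncard :=
    Set.ncard_union_add_ncard_inter A S
  have hinter : 1 < (A ∩ S).ncard := by omega
  obtain ⟨ε₁, hε₁, ε₂, hε₂, hne⟩ := (Set.one_lt_ncard (Set.toFinite _)).mp hinter
  refine ⟨f ε₁, ?_, f ε₂, ?_, fun h => hne (hinj h), ?_, ?_⟩
  · exact hε₁.1
  · exact hε₂.1
  · rw [key ε₁]; exact hε₁.2
  · rw [key ε₂]; exact hε₂.2


end TF2
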